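/- For real numbers l, a, b with 0 < b ≤ a and L := √(a² + b²) < l, one has S³ᴰ(l,a,b) = [2lb − 2lb·F(arcsin(a/l), arcsin(L/l), a/l) + 2ab·G(arcsin(a/l), arcsin(L/l), a/l)] + [2la − 2la·F(arcsin(b/l), arcsin(L/l), b/l) + 2ab·G(arcsin(b/l), arcsin(L/l), b/l)] − [(l²/2)·arcsin(a/l) + (3/2)·la·√(1 − a²/l²) − a²·(π/2 − arcsin(a/l))] − [(l²/2)·arcsin(b/l) + (3/2)·lb·√(1 − b²/l²) − b²·(π/2 − arcsin(b/l))] + [(l²/2)·arcsin(L/l) − (lL/2)·√(1 − L²/l²) − L²·(π/2 − arcsin(L/l))] + a·b·π·(π/2 − arcsin(L/l)). -/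

import Mathlib

open Real MeasureTheory Filter

/-- `A(l,a) = ∫_0^π min(a, l·|cos φ|) dφ` -/
noncomputable def A2 (l a : ℝ) : ℝ := ∫ φ in (0:ℝ)..π, min a (l * |Real.cos φ|)

/-- `B(l,b) = ∫_0^π min(b, l·sin φ) dφ` -/
noncomputable def B2 (l b : ℝ) : ℝ := ∫ φ in (0:ℝ)..π, min b (l * Real.sin φ)

/-- `AB(l,a,b) = ∫_0^π min(a, l·|cos φ|)·min(b, l·sin φ) dφ` -/
noncomputable def AB2 (l a b : ℝ) : ℝ :=
  ∫ φ in (0:ℝ)..π, min a (l * |Real.cos φ|) * min b (l * Real.sin φ)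

/-- Intersection probability for the 2D Buffon–Laplace needle problem. -/
noncomputable def P2 (l a b : ℝ) : ℝ :=
  (b * A2 l a + a * B2 l b - AB2 l a b) / (π * a * b)

/-- Intersection probability for the 2D spherocylinder Buffon–Laplace problem. -/
noncomputable def P2sc (l σ a b : ℝ) : ℝ :=
  ((b - σ) * A2 l (a - σ) + (a - σ) * B2 l (b - σ) - AB2 l (a - σ) (b - σ)
    + (σ * a + σ * b - σ ^ 2) * π) / (π * a * b)

/-- `A³ᴰ(l,a) = ∫_0^{π/2} ∫_0^π min(a, l·sin ψ·|cos φ|) dφ dψ` -/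
noncomputable def A3 (l a : ℝ) : ℝ :=
  ∫ ψ in (0:ℝ)..(π/2), ∫ φ in (0:ℝ)..π, min a (l * Real.sin ψ * |Real.cos φ|)

/-- `B³ᴰ(l,b) = ∫_0^{π/2} ∫_0^π min(b, l·sin ψ·sin φ) dφ dψ` -/
noncomputable def B3 (l b : ℝ) : ℝ :=
  ∫ ψ in (0:ℝ)..(π/2), ∫ φ in (0:ℝ)..π, min b (l * Real.sin ψ * Real.sin φ)

/-- `AB³ᴰ(l,a,b) = ∫_0^{π/2} ∫_0^π min(a, l·sin ψ·|cos φ|)·min(b, l·sin ψ·sin φ) dφ dψ` -/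
noncomputable def AB3 (l a b : ℝ) : ℝ :=
  ∫ ψ in (0:ℝ)..(π/2), ∫ φ in (0:ℝ)..π,
    min a (l * Real.sin ψ * |Real.cos φ|) * min b (l * Real.sin ψ * Real.sin φ)

/-- `S³ᴰ(l,a,b) = b·A³ᴰ(l,a) + a·B³ᴰ(l,b) − AB³ᴰ(l,a,b)` -/
noncomputable def S3 (l a b : ℝ) : ℝ := b * A3 l a + a * B3 l b - AB3 l a b

/-- `F(α,β,t) = ∫_α^β √(sin²ψ − t²) dψ` -/
noncomputable def Faux (α β t : ℝ) : ℝ :=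
  ∫ ψ in α..β, Real.sqrt (Real.sin ψ ^ 2 - t ^ 2)

/-- `G(α,β,t) = ∫_α^β (π/2 − arcsin(t / sin ψ)) dψ` -/
noncomputable def Gaux (α β t : ℝ) : ℝ :=
  ∫ ψ in α..β, (π / 2 - Real.arcsin (t / Real.sin ψ))

open Set intervalIntegral

lemma eqOn_intervalIntegrable {f g : ℝ → ℝ} {p q : ℝ}
    (h : EqOn f g (Set.uIcc p q)) (hg : IntervalIntegrable g volume p q) :
    IntervalIntegrable f volume p q := by
  rw [intervalIntegrable_iff] at hg ⊢
  exact hg.congr_fun (fun x hx => (h (Set.uIoc_subset_uIcc hx)).symm ▸ rfl) measurableSet_uIoc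

lemma integral_sin_mul_cos' (p q : ℝ) :
    ∫ x in p..q, Real.sin x * Real.cos x = Real.sin q ^ 2 / 2 - Real.sin p ^ 2 / 2 := by
  have h : ∀ x ∈ Set.uIcc p q, HasDerivAt (fun y => Real.sin y ^ 2 / 2) (Real.sin x * Real.cos x) x := by
    intro x _
    have := ((Real.hasDerivAt_sin x).pow 2).div_const 2
    simpa [mul_comm, mul_assoc, mul_div_assoc] using this
  rw [intervalIntegral.integral_eq_sub_of_hasDerivAt h
    ((Real.continuous_sin.mul Real.continuous_cos).intervalIntegrable _ _)]

lemma sym_half (f : ℝ → ℝ) (hc : Continuous f) (hf : ∀ x, f (π - x) = f x) :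
    ∫ x in (0:ℝ)..π, f x = 2 * ∫ x in (0:ℝ)..(π/2), f x := by
  have h1 : ∫ x in (π/2:ℝ)..π, f x = ∫ x in (0:ℝ)..(π/2), f x := by
    have h2 := intervalIntegral.integral_comp_sub_left (a := π/2) (b := π) f π
    rw [sub_self, sub_half] at h2
    simp only [hf] at h2
    rw [h2]
  rw [← intervalIntegral.integral_add_adjacent_intervals (a := (0:ℝ)) (b := π/2) (c := π)
    (hc.intervalIntegrable _ _) (hc.intervalIntegrable _ _), h1]
  ring

lemma abs_cos_of_mem {φ : ℝ} (h : φ ∈ Set.Icc (0:ℝ) (π/2)) : |Real.cos φ| = Real.cos φ :=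
  abs_of_nonneg (Real.cos_nonneg_of_mem_Icc ⟨by linarith [h.1, pi_pos], h.2⟩)

lemma innerA_small (a lam : ℝ) (h0 : 0 ≤ lam) (h : lam ≤ a) :
    ∫ φ in (0:ℝ)..π, min a (lam * |Real.cos φ|) = 2 * lam := by
  have hc : Continuous fun φ : ℝ => min a (lam * |Real.cos φ|) := by fun_prop
  rw [sym_half _ hc (by intro x; rw [Real.cos_pi_sub, abs_neg])]
  have e : ∫ φ in (0:ℝ)..(π/2), min a (lam * |Real.cos φ|)
      = ∫ φ in (0:ℝ)..(π/2), lam * Real.cos φ := by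
    apply intervalIntegral.integral_congr
    intro φ hφ
    dsimp only
    rw [Set.uIcc_of_le (by positivity)] at hφ
    rw [abs_cos_of_mem hφ, min_eq_right]
    nlinarith [Real.cos_le_one φ,
      Real.cos_nonneg_of_mem_Icc (⟨by linarith [hφ.1, pi_pos], hφ.2⟩ : φ ∈ Set.Icc (-(π/2)) (π/2))]
  rw [e, intervalIntegral.integral_const_mul, integral_cos]
  norm_num

lemma innerA_big (a lam : ℝ) (ha : 0 < a) (h : a ≤ lam) :
    ∫ φ in (0:ℝ)..π, min a (lam * |Real.cos φ|)
      = 2*lam - 2*Real.sqrt (lam^2 - a^2) + 2*a*(π/2 - Real.arcsin (a/lam)) := by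
  have hlam : 0 < lam := lt_of_lt_of_le ha h
  set c := Real.arccos (a/lam) with hcdef
  have hal1 : a / lam ≤ 1 := (div_le_one hlam).2 h
  have hal0 : 0 < a / lam := div_pos ha hlam
  have hc0 : 0 ≤ c := Real.arccos_nonneg _
  have hc2 : c ≤ π/2 := Real.arccos_le_pi_div_two.2 hal0.le
  have hcos : Real.cos c = a / lam := Real.cos_arccos (by linarith) hal1
  have hcont : Continuous fun φ : ℝ => min a (lam * |Real.cos φ|) := by fun_prop
  rw [sym_half _ hcont (by intro x; rw [Real.cos_pi_sub, abs_neg])]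
  rw [← intervalIntegral.integral_add_adjacent_intervals (a := (0:ℝ)) (b := c) (c := π/2)
    (hcont.intervalIntegrable _ _) (hcont.intervalIntegrable _ _)]
  have e1 : ∫ φ in (0:ℝ)..c, min a (lam * |Real.cos φ|) = ∫ φ in (0:ℝ)..c, a := by
    apply intervalIntegral.integral_congr; intro φ hφ; dsimp only
    rw [Set.uIcc_of_le hc0] at hφ
    have hmem : φ ∈ Set.Icc (0:ℝ) (π/2) := ⟨hφ.1, hφ.2.trans hc2⟩
    rw [abs_cos_of_mem hmem, min_eq_left]
    have hcc : a / lam ≤ Real.cos φ :=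
      hcos ▸ Real.cos_le_cos_of_nonneg_of_le_pi hφ.1 (by linarith [pi_pos, hc2]) hφ.2
    calc a = lam * (a / lam) := by field_simp
    _ ≤ lam * Real.cos φ := by nlinarith
  have e2 : ∫ φ in c..(π/2), min a (lam * |Real.cos φ|) = ∫ φ in c..(π/2), lam * Real.cos φ := by
    apply intervalIntegral.integral_congr; intro φ hφ; dsimp only
    rw [Set.uIcc_of_le hc2] at hφ
    have hmem : φ ∈ Set.Icc (0:ℝ) (π/2) := ⟨hc0.trans hφ.1, hφ.2⟩
    rw [abs_cos_of_mem hmem, min_eq_right]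
    have hcc : Real.cos φ ≤ a / lam :=
      hcos ▸ Real.cos_le_cos_of_nonneg_of_le_pi hc0 (by linarith [pi_pos, hφ.2]) hφ.1
    calc lam * Real.cos φ ≤ lam * (a/lam) := by nlinarith
    _ = a := by field_simp
  rw [e1, e2, intervalIntegral.integral_const, intervalIntegral.integral_const_mul, integral_cos]
  have hsin : Real.sin c = Real.sqrt (1 - (a/lam)^2) := Real.sin_arccos _
  have hs : lam * Real.sqrt (1 - (a/lam)^2) = Real.sqrt (lam^2 - a^2) := by
    rw [show lam^2 - a^2 = lam^2 * (1 - (a/lam)^2) by field_simp,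
      Real.sqrt_mul (sq_nonneg lam), Real.sqrt_sq hlam.le]
  have harc : c = π/2 - Real.arcsin (a/lam) := Real.arccos_eq_pi_div_two_sub_arcsin _
  rw [Real.sin_pi_div_two, hsin, smul_eq_mul]
  linear_combination 2*a*harc - 2*hs

lemma innerB_small (b lam : ℝ) (h0 : 0 ≤ lam) (h : lam ≤ b) :
    ∫ φ in (0:ℝ)..π, min b (lam * Real.sin φ) = 2 * lam := by
  have hc : Continuous fun φ : ℝ => min b (lam * Real.sin φ) := by fun_prop
  rw [sym_half _ hc (by intro x; rw [Real.sin_pi_sub])]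
  have e : ∫ φ in (0:ℝ)..(π/2), min b (lam * Real.sin φ)
      = ∫ φ in (0:ℝ)..(π/2), lam * Real.sin φ := by
    apply intervalIntegral.integral_congr
    intro φ hφ
    dsimp only
    rw [Set.uIcc_of_le (by positivity)] at hφ
    rw [min_eq_right]
    nlinarith [Real.sin_le_one φ]
  rw [e, intervalIntegral.integral_const_mul, integral_sin]
  norm_num

lemma innerB_big (b lam : ℝ) (hb : 0 < b) (h : b ≤ lam) :
    ∫ φ in (0:ℝ)..π, min b (lam * Real.sin φ)
      = 2*lam - 2*Real.sqrt (lam^2 - b^2) + 2*b*(π/2 - Real.arcsin (b/lam)) := by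
  have hlam : 0 < lam := lt_of_lt_of_le hb h
  set s := Real.arcsin (b/lam) with hsdef
  have hb1 : b / lam ≤ 1 := (div_le_one hlam).2 h
  have hb0 : 0 < b / lam := div_pos hb hlam
  have hs0 : 0 ≤ s := Real.arcsin_nonneg.2 hb0.le
  have hs2 : s ≤ π/2 := Real.arcsin_le_pi_div_two _
  have hsin : Real.sin s = b / lam := Real.sin_arcsin (by linarith) hb1
  have hcont : Continuous fun φ : ℝ => min b (lam * Real.sin φ) := by fun_prop
  rw [sym_half _ hcont (by intro x; rw [Real.sin_pi_sub])]
  rw [← intervalIntegral.integral_add_adjacent_intervals (a := (0:ℝ)) (b := s) (c := π/2)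
    (hcont.intervalIntegrable _ _) (hcont.intervalIntegrable _ _)]
  have e1 : ∫ φ in (0:ℝ)..s, min b (lam * Real.sin φ) = ∫ φ in (0:ℝ)..s, lam * Real.sin φ := by
    apply intervalIntegral.integral_congr; intro φ hφ; dsimp only
    rw [Set.uIcc_of_le hs0] at hφ
    rw [min_eq_right]
    have : Real.sin φ ≤ b / lam :=
      hsin ▸ Real.sin_le_sin_of_le_of_le_pi_div_two (by linarith [pi_pos, hφ.1]) hs2 hφ.2
    calc lam * Real.sin φ ≤ lam * (b/lam) := by nlinarith
    _ = b := by field_simp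
  have e2 : ∫ φ in s..(π/2), min b (lam * Real.sin φ) = ∫ φ in s..(π/2), b := by
    apply intervalIntegral.integral_congr; intro φ hφ; dsimp only
    rw [Set.uIcc_of_le hs2] at hφ
    rw [min_eq_left]
    have : b / lam ≤ Real.sin φ :=
      hsin ▸ Real.sin_le_sin_of_le_of_le_pi_div_two (by linarith [pi_pos, hs0]) hφ.2 hφ.1
    calc b = lam * (b/lam) := by field_simp
    _ ≤ lam * Real.sin φ := by nlinarith
  rw [e1, e2, intervalIntegral.integral_const, intervalIntegral.integral_const_mul, integral_sin]
  have hcossq : Real.cos s = Real.sqrt (1 - (b/lam)^2) := by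
    rw [hsdef, Real.cos_arcsin]
  have hs' : lam * Real.sqrt (1 - (b/lam)^2) = Real.sqrt (lam^2 - b^2) := by
    rw [show lam^2 - b^2 = lam^2 * (1 - (b/lam)^2) by field_simp,
      Real.sqrt_mul (sq_nonneg lam), Real.sqrt_sq hlam.le]
  rw [Real.cos_zero, hcossq, smul_eq_mul]
  linear_combination -2*hs'

lemma sin_mem {φ : ℝ} (h : φ ∈ Set.Icc (0:ℝ) (π/2)) : 0 ≤ Real.sin φ ∧ Real.sin φ ≤ 1 :=
  ⟨Real.sin_nonneg_of_nonneg_of_le_pi h.1 (by linarith [pi_pos, h.2]), Real.sin_le_one φ⟩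

lemma cos_mem {φ : ℝ} (h : φ ∈ Set.Icc (0:ℝ) (π/2)) : 0 ≤ Real.cos φ ∧ Real.cos φ ≤ 1 :=
  ⟨Real.cos_nonneg_of_mem_Icc ⟨by linarith [h.1, pi_pos], h.2⟩, Real.cos_le_one φ⟩

lemma AB_symm (a b lam : ℝ) (x : ℝ) :
    min a (lam * |Real.cos (π - x)|) * min b (lam * Real.sin (π - x))
      = min a (lam * |Real.cos x|) * min b (lam * Real.sin x) := by
  rw [Real.cos_pi_sub, Real.sin_pi_sub, abs_neg]

lemma innerAB_1 (a b lam : ℝ) (h0 : 0 ≤ lam) (hlb : lam ≤ b) (hba : b ≤ a) :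
    ∫ φ in (0:ℝ)..π, min a (lam * |Real.cos φ|) * min b (lam * Real.sin φ) = lam^2 := by
  have hcont : Continuous fun φ : ℝ =>
      min a (lam * |Real.cos φ|) * min b (lam * Real.sin φ) := by fun_prop
  rw [sym_half _ hcont (AB_symm a b lam)]
  have e : ∫ φ in (0:ℝ)..(π/2), min a (lam * |Real.cos φ|) * min b (lam * Real.sin φ)
      = ∫ φ in (0:ℝ)..(π/2), lam^2 * (Real.sin φ * Real.cos φ) := by
    apply intervalIntegral.integral_congr; intro φ hφ; dsimp only
    rw [Set.uIcc_of_le (by positivity)] at hφ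
    obtain ⟨hs0, hs1⟩ := sin_mem hφ; obtain ⟨hc0, hc1⟩ := cos_mem hφ
    rw [abs_cos_of_mem hφ, min_eq_right (by nlinarith), min_eq_right (by nlinarith)]
    ring
  rw [e, intervalIntegral.integral_const_mul, integral_sin_mul_cos']
  norm_num
  ring

lemma innerAB_2 (a b lam : ℝ) (hb : 0 < b) (hbl : b ≤ lam) (hla : lam ≤ a) :
    ∫ φ in (0:ℝ)..π, min a (lam * |Real.cos φ|) * min b (lam * Real.sin φ)
      = 2*b*lam - b^2 := by
  have hlam : 0 < lam := lt_of_lt_of_le hb hbl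
  set s := Real.arcsin (b/lam) with hsdef
  have hb1 : b / lam ≤ 1 := (div_le_one hlam).2 hbl
  have hb0 : 0 < b / lam := div_pos hb hlam
  have hs0 : 0 ≤ s := Real.arcsin_nonneg.2 hb0.le
  have hs2 : s ≤ π/2 := Real.arcsin_le_pi_div_two _
  have hsin : Real.sin s = b / lam := Real.sin_arcsin (by linarith) hb1
  have hcont : Continuous fun φ : ℝ =>
      min a (lam * |Real.cos φ|) * min b (lam * Real.sin φ) := by fun_prop
  rw [sym_half _ hcont (AB_symm a b lam)]
  rw [← intervalIntegral.integral_add_adjacent_intervals (a := (0:ℝ)) (b := s) (c := π/2)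
    (hcont.intervalIntegrable _ _) (hcont.intervalIntegrable _ _)]
  have e1 : ∫ φ in (0:ℝ)..s, min a (lam * |Real.cos φ|) * min b (lam * Real.sin φ)
      = ∫ φ in (0:ℝ)..s, lam^2 * (Real.sin φ * Real.cos φ) := by
    apply intervalIntegral.integral_congr; intro φ hφ; dsimp only
    rw [Set.uIcc_of_le hs0] at hφ
    have hmem : φ ∈ Set.Icc (0:ℝ) (π/2) := ⟨hφ.1, hφ.2.trans hs2⟩
    obtain ⟨hsn0, hsn1⟩ := sin_mem hmem; obtain ⟨hcn0, hcn1⟩ := cos_mem hmem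
    have hss : Real.sin φ ≤ b / lam :=
      hsin ▸ Real.sin_le_sin_of_le_of_le_pi_div_two (by linarith [pi_pos, hφ.1]) hs2 hφ.2
    have hss' : lam * Real.sin φ ≤ b := by
      calc lam * Real.sin φ ≤ lam * (b/lam) := by nlinarith
      _ = b := by field_simp
    rw [abs_cos_of_mem hmem, min_eq_right (by nlinarith), min_eq_right hss']
    ring
  have e2 : ∫ φ in s..(π/2), min a (lam * |Real.cos φ|) * min b (lam * Real.sin φ)
      = ∫ φ in s..(π/2), (b*lam) * Real.cos φ := by
    apply intervalIntegral.integral_congr; intro φ hφ; dsimp only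
    rw [Set.uIcc_of_le hs2] at hφ
    have hmem : φ ∈ Set.Icc (0:ℝ) (π/2) := ⟨hs0.trans hφ.1, hφ.2⟩
    obtain ⟨hsn0, hsn1⟩ := sin_mem hmem; obtain ⟨hcn0, hcn1⟩ := cos_mem hmem
    have hss : b / lam ≤ Real.sin φ :=
      hsin ▸ Real.sin_le_sin_of_le_of_le_pi_div_two (by linarith [pi_pos, hs0]) hφ.2 hφ.1
    have hss' : b ≤ lam * Real.sin φ := by
      calc b = lam * (b/lam) := by field_simp
      _ ≤ lam * Real.sin φ := by nlinarith
    rw [abs_cos_of_mem hmem, min_eq_right (by nlinarith), min_eq_left hss']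
    ring
  rw [e1, e2, intervalIntegral.integral_const_mul, intervalIntegral.integral_const_mul,
    integral_sin_mul_cos', integral_cos, hsin, Real.sin_pi_div_two, Real.sin_zero]
  have : lam ≠ 0 := hlam.ne'
  field_simp
  ring

set_option maxHeartbeats 1600000 in
lemma innerAB_3 (a b lam : ℝ) (hb : 0 < b) (hba : b ≤ a) (hal : a ≤ lam)
    (hlab : lam^2 ≤ a^2 + b^2) :
    ∫ φ in (0:ℝ)..π, min a (lam * |Real.cos φ|) * min b (lam * Real.sin φ)
      = 2*a*lam + 2*b*lam - a^2 - b^2 - lam^2 := by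
  have ha : 0 < a := hb.trans_le hba
  have hlam : 0 < lam := ha.trans_le hal
  set c := Real.arccos (a/lam) with hcdef
  set s := Real.arcsin (b/lam) with hsdef
  have ha1 : a / lam ≤ 1 := (div_le_one hlam).2 hal
  have ha0 : 0 < a / lam := div_pos ha hlam
  have hb1 : b / lam ≤ 1 := (div_le_one hlam).2 (hba.trans hal)
  have hb0 : 0 < b / lam := div_pos hb hlam
  have hc0 : 0 ≤ c := Real.arccos_nonneg _
  have hc2 : c ≤ π/2 := Real.arccos_le_pi_div_two.2 ha0.le
  have hs0 : 0 ≤ s := Real.arcsin_nonneg.2 hb0.le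
  have hs2 : s ≤ π/2 := Real.arcsin_le_pi_div_two _
  have hcosc : Real.cos c = a / lam := Real.cos_arccos (by linarith) ha1
  have hsins : Real.sin s = b / lam := Real.sin_arcsin (by linarith) hb1
  have hsinc : Real.sin c = Real.sqrt (1 - (a/lam)^2) := Real.sin_arccos _
  have hsq : (0:ℝ) ≤ 1 - (a/lam)^2 := by nlinarith
  have hsinc_sq : Real.sin c ^ 2 = 1 - (a/lam)^2 := by rw [hsinc, Real.sq_sqrt hsq]
  have hl0 : lam ≠ 0 := hlam.ne'
  have hcs : c ≤ s := by
    have h1 : Real.sin c ≤ Real.sin s := by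
      rw [hsinc, hsins]
      rw [show b / lam = Real.sqrt ((b/lam)^2) by rw [Real.sqrt_sq hb0.le]]
      apply Real.sqrt_le_sqrt
      rw [div_pow, div_pow]
      rw [sub_le_iff_le_add, div_add' _ _ _ (by positivity), le_div_iff₀ (by positivity)]
      have hd : a^2/lam^2*lam^2 = a^2 := div_mul_cancel₀ _ (pow_ne_zero 2 hl0)
      linarith
    exact (Real.strictMonoOn_sin.le_iff_le ⟨by linarith [pi_pos], hc2⟩
      ⟨by linarith [pi_pos], hs2⟩).mp h1
  have hcont : Continuous fun φ : ℝ =>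
      min a (lam * |Real.cos φ|) * min b (lam * Real.sin φ) := by fun_prop
  rw [sym_half _ hcont (AB_symm a b lam)]
  rw [← intervalIntegral.integral_add_adjacent_intervals (a := (0:ℝ)) (b := c) (c := π/2)
    (hcont.intervalIntegrable _ _) (hcont.intervalIntegrable _ _),
    ← intervalIntegral.integral_add_adjacent_intervals (a := c) (b := s) (c := π/2)
    (hcont.intervalIntegrable _ _) (hcont.intervalIntegrable _ _)]
  have e1 : ∫ φ in (0:ℝ)..c, min a (lam * |Real.cos φ|) * min b (lam * Real.sin φ)
      = ∫ φ in (0:ℝ)..c, (a*lam) * Real.sin φ := by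
    apply intervalIntegral.integral_congr; intro φ hφ; dsimp only
    rw [Set.uIcc_of_le hc0] at hφ
    have hmem : φ ∈ Set.Icc (0:ℝ) (π/2) := ⟨hφ.1, hφ.2.trans hc2⟩
    obtain ⟨hsn0, hsn1⟩ := sin_mem hmem; obtain ⟨hcn0, hcn1⟩ := cos_mem hmem
    have hgec : a / lam ≤ Real.cos φ :=
      hcosc ▸ Real.cos_le_cos_of_nonneg_of_le_pi hφ.1 (by linarith [pi_pos, hc2]) hφ.2
    have h1 : a ≤ lam * Real.cos φ := by
      calc a = lam * (a/lam) := by field_simp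
      _ ≤ lam * Real.cos φ := by nlinarith
    have hles : Real.sin φ ≤ b / lam := by
      rw [← hsins]
      exact Real.sin_le_sin_of_le_of_le_pi_div_two (by linarith [pi_pos, hφ.1]) hs2
        (hφ.2.trans hcs)
    have h2 : lam * Real.sin φ ≤ b := by
      calc lam * Real.sin φ ≤ lam * (b/lam) := by nlinarith
      _ = b := by field_simp
    rw [abs_cos_of_mem hmem, min_eq_left h1, min_eq_right h2]
    ring
  have e2 : ∫ φ in c..s, min a (lam * |Real.cos φ|) * min b (lam * Real.sin φ)
      = ∫ φ in c..s, lam^2 * (Real.sin φ * Real.cos φ) := by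
    apply intervalIntegral.integral_congr; intro φ hφ; dsimp only
    rw [Set.uIcc_of_le hcs] at hφ
    have hmem : φ ∈ Set.Icc (0:ℝ) (π/2) := ⟨hc0.trans hφ.1, hφ.2.trans hs2⟩
    obtain ⟨hsn0, hsn1⟩ := sin_mem hmem; obtain ⟨hcn0, hcn1⟩ := cos_mem hmem
    have hlec : Real.cos φ ≤ a / lam :=
      hcosc ▸ Real.cos_le_cos_of_nonneg_of_le_pi hc0 (by linarith [pi_pos, hmem.2]) hφ.1
    have h1 : lam * Real.cos φ ≤ a := by
      calc lam * Real.cos φ ≤ lam * (a/lam) := by nlinarith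
      _ = a := by field_simp
    have hles : Real.sin φ ≤ b / lam := by
      rw [← hsins]
      exact Real.sin_le_sin_of_le_of_le_pi_div_two (by linarith [pi_pos, hmem.1]) hs2 hφ.2
    have h2 : lam * Real.sin φ ≤ b := by
      calc lam * Real.sin φ ≤ lam * (b/lam) := by nlinarith
      _ = b := by field_simp
    rw [abs_cos_of_mem hmem, min_eq_right h1, min_eq_right h2]
    ring
  have e3 : ∫ φ in s..(π/2), min a (lam * |Real.cos φ|) * min b (lam * Real.sin φ)
      = ∫ φ in s..(π/2), (b*lam) * Real.cos φ := by
    apply intervalIntegral.integral_congr; intro φ hφ; dsimp only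
    rw [Set.uIcc_of_le hs2] at hφ
    have hmem : φ ∈ Set.Icc (0:ℝ) (π/2) := ⟨hs0.trans hφ.1, hφ.2⟩
    obtain ⟨hsn0, hsn1⟩ := sin_mem hmem; obtain ⟨hcn0, hcn1⟩ := cos_mem hmem
    have hlec : Real.cos φ ≤ a / lam :=
      hcosc ▸ Real.cos_le_cos_of_nonneg_of_le_pi hc0 (by linarith [pi_pos, hmem.2])
        (hcs.trans hφ.1)
    have h1 : lam * Real.cos φ ≤ a := by
      calc lam * Real.cos φ ≤ lam * (a/lam) := by nlinarith
      _ = a := by field_simp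
    have hges : b / lam ≤ Real.sin φ := by
      rw [← hsins]
      exact Real.sin_le_sin_of_le_of_le_pi_div_two (by linarith [pi_pos, hs0]) hφ.2 hφ.1
    have h2 : b ≤ lam * Real.sin φ := by
      calc b = lam * (b/lam) := by field_simp
      _ ≤ lam * Real.sin φ := by nlinarith
    rw [abs_cos_of_mem hmem, min_eq_right h1, min_eq_left h2]
    ring
  rw [e1, e2, e3, intervalIntegral.integral_const_mul, intervalIntegral.integral_const_mul,
    intervalIntegral.integral_const_mul, integral_sin, integral_cos, integral_sin_mul_cos',
    hsins, hcosc, hsinc_sq, Real.sin_pi_div_two, Real.cos_zero]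
  field_simp
  ring

set_option maxHeartbeats 1600000 in
lemma innerAB_4 (a b lam : ℝ) (hb : 0 < b) (hba : b ≤ a) (hlam : 0 < lam)
    (hlab : a^2 + b^2 ≤ lam^2) :
    ∫ φ in (0:ℝ)..π, min a (lam * |Real.cos φ|) * min b (lam * Real.sin φ)
      = 2*a*lam - 2*a*Real.sqrt (lam^2 - b^2) + 2*b*lam - 2*b*Real.sqrt (lam^2 - a^2)
        + 2*a*b*(π/2 - Real.arcsin (a/lam) - Real.arcsin (b/lam)) := by
  have ha : 0 < a := hb.trans_le hba
  have hal : a ≤ lam := by nlinarith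
  have hbl : b ≤ lam := by nlinarith
  set c := Real.arccos (a/lam) with hcdef
  set s := Real.arcsin (b/lam) with hsdef
  have hl0 : lam ≠ 0 := hlam.ne'
  have ha1 : a / lam ≤ 1 := (div_le_one hlam).2 hal
  have ha0 : 0 < a / lam := div_pos ha hlam
  have hb1 : b / lam ≤ 1 := (div_le_one hlam).2 hbl
  have hb0 : 0 < b / lam := div_pos hb hlam
  have hc0 : 0 ≤ c := Real.arccos_nonneg _
  have hc2 : c ≤ π/2 := Real.arccos_le_pi_div_two.2 ha0.le
  have hs0 : 0 ≤ s := Real.arcsin_nonneg.2 hb0.le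
  have hs2 : s ≤ π/2 := Real.arcsin_le_pi_div_two _
  have hcosc : Real.cos c = a / lam := Real.cos_arccos (by linarith) ha1
  have hsins : Real.sin s = b / lam := Real.sin_arcsin (by linarith) hb1
  have hsinc : Real.sin c = Real.sqrt (1 - (a/lam)^2) := Real.sin_arccos _
  have hcoss : Real.cos s = Real.sqrt (1 - (b/lam)^2) := by rw [hsdef, Real.cos_arcsin]
  have hsqa : (0:ℝ) ≤ 1 - (a/lam)^2 := by nlinarith
  have hsqb : (0:ℝ) ≤ 1 - (b/lam)^2 := by nlinarith
  have key : (b/lam)^2 ≤ 1 - (a/lam)^2 := by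
    rw [div_pow, div_pow, le_sub_iff_add_le, ← add_div, div_le_one (by positivity)]
    linarith
  have key2 : (a/lam)^2 ≤ 1 - (b/lam)^2 := by
    rw [div_pow, div_pow, le_sub_iff_add_le, ← add_div, div_le_one (by positivity)]
    linarith
  have hsc : s ≤ c := by
    have h1 : Real.sin s ≤ Real.sin c := by
      rw [hsinc, hsins, show b / lam = Real.sqrt ((b/lam)^2) by rw [Real.sqrt_sq hb0.le]]
      exact Real.sqrt_le_sqrt key
    exact (Real.strictMonoOn_sin.le_iff_le ⟨by linarith [pi_pos], hs2⟩
      ⟨by linarith [pi_pos], hc2⟩).mp h1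
  have hgeas : a / lam ≤ Real.cos s := by
    rw [hcoss, show a / lam = Real.sqrt ((a/lam)^2) by rw [Real.sqrt_sq ha0.le]]
    exact Real.sqrt_le_sqrt key2
  have hgebs : b / lam ≤ Real.sin c := by
    rw [hsinc, show b / lam = Real.sqrt ((b/lam)^2) by rw [Real.sqrt_sq hb0.le]]
    exact Real.sqrt_le_sqrt key
  have hcont : Continuous fun φ : ℝ =>
      min a (lam * |Real.cos φ|) * min b (lam * Real.sin φ) := by fun_prop
  rw [sym_half _ hcont (AB_symm a b lam)]
  rw [← intervalIntegral.integral_add_adjacent_intervals (a := (0:ℝ)) (b := s) (c := π/2)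
    (hcont.intervalIntegrable _ _) (hcont.intervalIntegrable _ _),
    ← intervalIntegral.integral_add_adjacent_intervals (a := s) (b := c) (c := π/2)
    (hcont.intervalIntegrable _ _) (hcont.intervalIntegrable _ _)]
  have e1 : ∫ φ in (0:ℝ)..s, min a (lam * |Real.cos φ|) * min b (lam * Real.sin φ)
      = ∫ φ in (0:ℝ)..s, (a*lam) * Real.sin φ := by
    apply intervalIntegral.integral_congr; intro φ hφ; dsimp only
    rw [Set.uIcc_of_le hs0] at hφ
    have hmem : φ ∈ Set.Icc (0:ℝ) (π/2) := ⟨hφ.1, hφ.2.trans hs2⟩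
    obtain ⟨hsn0, hsn1⟩ := sin_mem hmem; obtain ⟨hcn0, hcn1⟩ := cos_mem hmem
    have hgec : Real.cos s ≤ Real.cos φ :=
      Real.cos_le_cos_of_nonneg_of_le_pi hφ.1 (by linarith [pi_pos, hs2]) hφ.2
    have h1 : a ≤ lam * Real.cos φ := by
      calc a = lam * (a/lam) := by field_simp
      _ ≤ lam * Real.cos φ := by nlinarith [hgeas.trans hgec]
    have hles : Real.sin φ ≤ b / lam := by
      rw [← hsins]
      exact Real.sin_le_sin_of_le_of_le_pi_div_two (by linarith [pi_pos, hφ.1]) hs2 hφ.2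
    have h2 : lam * Real.sin φ ≤ b := by
      calc lam * Real.sin φ ≤ lam * (b/lam) := by nlinarith
      _ = b := by field_simp
    rw [abs_cos_of_mem hmem, min_eq_left h1, min_eq_right h2]
    ring
  have e2 : ∫ φ in s..c, min a (lam * |Real.cos φ|) * min b (lam * Real.sin φ)
      = ∫ φ in s..c, a*b := by
    apply intervalIntegral.integral_congr; intro φ hφ; dsimp only
    rw [Set.uIcc_of_le hsc] at hφ
    have hmem : φ ∈ Set.Icc (0:ℝ) (π/2) := ⟨hs0.trans hφ.1, hφ.2.trans hc2⟩
    obtain ⟨hsn0, hsn1⟩ := sin_mem hmem; obtain ⟨hcn0, hcn1⟩ := cos_mem hmem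
    have hgec : a / lam ≤ Real.cos φ :=
      hcosc ▸ Real.cos_le_cos_of_nonneg_of_le_pi hmem.1 (by linarith [pi_pos, hc2]) hφ.2
    have h1 : a ≤ lam * Real.cos φ := by
      calc a = lam * (a/lam) := by field_simp
      _ ≤ lam * Real.cos φ := by nlinarith
    have hges : b / lam ≤ Real.sin φ := by
      rw [← hsins]
      exact Real.sin_le_sin_of_le_of_le_pi_div_two (by linarith [pi_pos, hs0]) hmem.2 hφ.1
    have h2 : b ≤ lam * Real.sin φ := by
      calc b = lam * (b/lam) := by field_simp
      _ ≤ lam * Real.sin φ := by nlinarith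
    rw [abs_cos_of_mem hmem, min_eq_left h1, min_eq_left h2]
  have e3 : ∫ φ in c..(π/2), min a (lam * |Real.cos φ|) * min b (lam * Real.sin φ)
      = ∫ φ in c..(π/2), (b*lam) * Real.cos φ := by
    apply intervalIntegral.integral_congr; intro φ hφ; dsimp only
    rw [Set.uIcc_of_le hc2] at hφ
    have hmem : φ ∈ Set.Icc (0:ℝ) (π/2) := ⟨hc0.trans hφ.1, hφ.2⟩
    obtain ⟨hsn0, hsn1⟩ := sin_mem hmem; obtain ⟨hcn0, hcn1⟩ := cos_mem hmem
    have hlec : Real.cos φ ≤ a / lam :=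
      hcosc ▸ Real.cos_le_cos_of_nonneg_of_le_pi hc0 (by linarith [pi_pos, hmem.2]) hφ.1
    have h1 : lam * Real.cos φ ≤ a := by
      calc lam * Real.cos φ ≤ lam * (a/lam) := by nlinarith
      _ = a := by field_simp
    have hges : Real.sin c ≤ Real.sin φ :=
      Real.sin_le_sin_of_le_of_le_pi_div_two (by linarith [pi_pos, hc0]) hmem.2 hφ.1
    have h2 : b ≤ lam * Real.sin φ := by
      calc b = lam * (b/lam) := by field_simp
      _ ≤ lam * Real.sin φ := by nlinarith [hgebs.trans hges]
    rw [abs_cos_of_mem hmem, min_eq_right h1, min_eq_left h2]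
    ring
  have hs'a : lam * Real.sqrt (1 - (a/lam)^2) = Real.sqrt (lam^2 - a^2) := by
    rw [show lam^2 - a^2 = lam^2 * (1 - (a/lam)^2) by field_simp,
      Real.sqrt_mul (sq_nonneg lam), Real.sqrt_sq hlam.le]
  have hs'b : lam * Real.sqrt (1 - (b/lam)^2) = Real.sqrt (lam^2 - b^2) := by
    rw [show lam^2 - b^2 = lam^2 * (1 - (b/lam)^2) by field_simp,
      Real.sqrt_mul (sq_nonneg lam), Real.sqrt_sq hlam.le]
  have harc : c = π/2 - Real.arcsin (a/lam) := Real.arccos_eq_pi_div_two_sub_arcsin _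
  rw [e1, e2, e3, intervalIntegral.integral_const_mul, intervalIntegral.integral_const,
    intervalIntegral.integral_const_mul, integral_sin, integral_cos,
    hcoss, hsinc, Real.cos_zero, Real.sin_pi_div_two, smul_eq_mul, harc]
  linear_combination -2*a*hs'b - 2*b*hs'a

set_option maxHeartbeats 1600000 in
lemma A3_eq (l a : ℝ) (ha : 0 < a) (hal : a < l) :
    A3 l a = 2*l - 2*l*Faux (Real.arcsin (a/l)) (π/2) (a/l)
      + 2*a*Gaux (Real.arcsin (a/l)) (π/2) (a/l) := by
  have hl : 0 < l := ha.trans hal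
  set pa := Real.arcsin (a/l) with hpa
  have ha1 : a/l ≤ 1 := by rw [div_le_one hl]; exact hal.le
  have ha0 : 0 < a/l := div_pos ha hl
  have hpa0 : 0 < pa := Real.arcsin_pos.2 ha0
  have hpa2 : pa ≤ π/2 := Real.arcsin_le_pi_div_two _
  have hsinpa : Real.sin pa = a/l := Real.sin_arcsin (by linarith) ha1
  have hsinpos : ∀ x ∈ Set.Icc pa (π/2), a/l ≤ Real.sin x := by
    intro x hx
    rw [← hsinpa]
    exact Real.sin_le_sin_of_le_of_le_pi_div_two (by linarith [pi_pos]) hx.2 hx.1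
  have e1 : Set.EqOn (fun ψ => ∫ φ in (0:ℝ)..π, min a (l * Real.sin ψ * |Real.cos φ|))
      (fun ψ => (2*l) * Real.sin ψ) (Set.uIcc 0 pa) := by
    intro ψ hψ
    rw [Set.uIcc_of_le hpa0.le] at hψ
    have hs0 : 0 ≤ Real.sin ψ :=
      Real.sin_nonneg_of_nonneg_of_le_pi hψ.1 (by linarith [pi_pos, hψ.2, hpa2])
    have hsle : Real.sin ψ ≤ a/l := by
      rw [← hsinpa]
      exact Real.sin_le_sin_of_le_of_le_pi_div_two (by linarith [pi_pos, hψ.1]) hpa2 hψ.2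
    have key := innerA_small a (l * Real.sin ψ) (by positivity)
      (by calc l * Real.sin ψ ≤ l * (a/l) := by nlinarith
          _ = a := by field_simp)
    dsimp only
    rw [key]; ring
  have e2 : Set.EqOn (fun ψ => ∫ φ in (0:ℝ)..π, min a (l * Real.sin ψ * |Real.cos φ|))
      (fun ψ => (2*l) * Real.sin ψ - (2*l) * Real.sqrt (Real.sin ψ ^ 2 - (a/l)^2)
        + (2*a) * (π/2 - Real.arcsin ((a/l) / Real.sin ψ))) (Set.uIcc pa (π/2)) := by
    intro ψ hψ
    rw [Set.uIcc_of_le hpa2] at hψ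
    have hsge : a/l ≤ Real.sin ψ := hsinpos ψ hψ
    have hsp : 0 < Real.sin ψ := lt_of_lt_of_le ha0 hsge
    have hage : a ≤ l * Real.sin ψ := by
      calc a = l * (a/l) := by field_simp
      _ ≤ l * Real.sin ψ := by nlinarith
    have key := innerA_big a (l * Real.sin ψ) ha hage
    dsimp only
    rw [key]
    have h1 : Real.sqrt ((l*Real.sin ψ)^2 - a^2) = l * Real.sqrt (Real.sin ψ^2 - (a/l)^2) := by
      rw [show (l*Real.sin ψ)^2 - a^2 = l^2 * (Real.sin ψ^2 - (a/l)^2) by field_simp,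
        Real.sqrt_mul (sq_nonneg l), Real.sqrt_sq hl.le]
    have h2 : a / (l * Real.sin ψ) = (a/l) / Real.sin ψ := by rw [div_div]
    rw [h1, h2]; ring
  have hcontG : ContinuousOn (fun ψ => (2*a) * (π/2 - Real.arcsin ((a/l) / Real.sin ψ)))
      (Set.Icc pa (π/2)) := by
    apply ContinuousOn.mul continuousOn_const
    apply ContinuousOn.sub continuousOn_const
    apply Real.continuous_arcsin.comp_continuousOn
    exact ContinuousOn.div continuousOn_const Real.continuous_sin.continuousOn
      (fun x hx => (lt_of_lt_of_le ha0 (hsinpos x hx)).ne')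
  have i1 : IntervalIntegrable
      (fun ψ => ∫ φ in (0:ℝ)..π, min a (l * Real.sin ψ * |Real.cos φ|)) volume 0 pa :=
    eqOn_intervalIntegrable e1 (by apply Continuous.intervalIntegrable; fun_prop)
  have hcont2 : ContinuousOn (fun ψ => (2*l) * Real.sin ψ
        - (2*l) * Real.sqrt (Real.sin ψ ^ 2 - (a/l)^2)
        + (2*a) * (π/2 - Real.arcsin ((a/l) / Real.sin ψ))) (Set.uIcc pa (π/2)) := by
    rw [Set.uIcc_of_le hpa2]
    exact ContinuousOn.add (by fun_prop) hcontG
  have i2 : IntervalIntegrable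
      (fun ψ => ∫ φ in (0:ℝ)..π, min a (l * Real.sin ψ * |Real.cos φ|)) volume pa (π/2) :=
    eqOn_intervalIntegrable e2 hcont2.intervalIntegrable
  rw [show A3 l a
    = ∫ ψ in (0:ℝ)..(π/2), ∫ φ in (0:ℝ)..π, min a (l * Real.sin ψ * |Real.cos φ|) from rfl]
  rw [← intervalIntegral.integral_add_adjacent_intervals i1 i2,
    intervalIntegral.integral_congr e1, intervalIntegral.integral_congr e2]
  have hSi : IntervalIntegrable (fun ψ => (2*l) * Real.sin ψ) volume pa (π/2) := by
    apply Continuous.intervalIntegrable; fun_prop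
  have hFi : IntervalIntegrable (fun ψ => (2*l) * Real.sqrt (Real.sin ψ ^ 2 - (a/l)^2))
      volume pa (π/2) := by
    apply Continuous.intervalIntegrable; fun_prop
  have hGi : IntervalIntegrable (fun ψ => (2*a) * (π/2 - Real.arcsin ((a/l) / Real.sin ψ)))
      volume pa (π/2) := by
    apply ContinuousOn.intervalIntegrable
    rw [Set.uIcc_of_le hpa2]; exact hcontG
  rw [intervalIntegral.integral_add (hSi.sub hFi) hGi, intervalIntegral.integral_sub hSi hFi,
    intervalIntegral.integral_const_mul, intervalIntegral.integral_const_mul,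
    intervalIntegral.integral_const_mul, intervalIntegral.integral_const_mul,
    integral_sin, integral_sin]
  rw [show (∫ ψ in pa..(π/2), Real.sqrt (Real.sin ψ ^ 2 - (a/l)^2)) = Faux pa (π/2) (a/l) from rfl,
    show (∫ ψ in pa..(π/2), (π/2 - Real.arcsin ((a/l) / Real.sin ψ))) = Gaux pa (π/2) (a/l) from rfl,
    Real.cos_zero, Real.cos_pi_div_two]
  ring

set_option maxHeartbeats 1600000 in
lemma B3_eq (l b : ℝ) (hb : 0 < b) (hbl : b < l) :
    B3 l b = 2*l - 2*l*Faux (Real.arcsin (b/l)) (π/2) (b/l)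
      + 2*b*Gaux (Real.arcsin (b/l)) (π/2) (b/l) := by
  have hl : 0 < l := hb.trans hbl
  set pb := Real.arcsin (b/l) with hpb
  have hb1 : b/l ≤ 1 := by rw [div_le_one hl]; exact hbl.le
  have hb0 : 0 < b/l := div_pos hb hl
  have hpb0 : 0 < pb := Real.arcsin_pos.2 hb0
  have hpb2 : pb ≤ π/2 := Real.arcsin_le_pi_div_two _
  have hsinpb : Real.sin pb = b/l := Real.sin_arcsin (by linarith) hb1
  have hsinpos : ∀ x ∈ Set.Icc pb (π/2), b/l ≤ Real.sin x := by
    intro x hx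
    rw [← hsinpb]
    exact Real.sin_le_sin_of_le_of_le_pi_div_two (by linarith [pi_pos]) hx.2 hx.1
  have e1 : Set.EqOn (fun ψ => ∫ φ in (0:ℝ)..π, min b (l * Real.sin ψ * Real.sin φ))
      (fun ψ => (2*l) * Real.sin ψ) (Set.uIcc 0 pb) := by
    intro ψ hψ
    rw [Set.uIcc_of_le hpb0.le] at hψ
    have hs0 : 0 ≤ Real.sin ψ :=
      Real.sin_nonneg_of_nonneg_of_le_pi hψ.1 (by linarith [pi_pos, hψ.2, hpb2])
    have hsle : Real.sin ψ ≤ b/l := by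
      rw [← hsinpb]
      exact Real.sin_le_sin_of_le_of_le_pi_div_two (by linarith [pi_pos, hψ.1]) hpb2 hψ.2
    have key := innerB_small b (l * Real.sin ψ) (by positivity)
      (by calc l * Real.sin ψ ≤ l * (b/l) := by nlinarith
          _ = b := by field_simp)
    dsimp only
    rw [key]; ring
  have e2 : Set.EqOn (fun ψ => ∫ φ in (0:ℝ)..π, min b (l * Real.sin ψ * Real.sin φ))
      (fun ψ => (2*l) * Real.sin ψ - (2*l) * Real.sqrt (Real.sin ψ ^ 2 - (b/l)^2)
        + (2*b) * (π/2 - Real.arcsin ((b/l) / Real.sin ψ))) (Set.uIcc pb (π/2)) := by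
    intro ψ hψ
    rw [Set.uIcc_of_le hpb2] at hψ
    have hsge : b/l ≤ Real.sin ψ := hsinpos ψ hψ
    have hsp : 0 < Real.sin ψ := lt_of_lt_of_le hb0 hsge
    have hbge : b ≤ l * Real.sin ψ := by
      calc b = l * (b/l) := by field_simp
      _ ≤ l * Real.sin ψ := by nlinarith
    have key := innerB_big b (l * Real.sin ψ) hb hbge
    dsimp only
    rw [key]
    have h1 : Real.sqrt ((l*Real.sin ψ)^2 - b^2) = l * Real.sqrt (Real.sin ψ^2 - (b/l)^2) := by
      rw [show (l*Real.sin ψ)^2 - b^2 = l^2 * (Real.sin ψ^2 - (b/l)^2) by field_simp,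
        Real.sqrt_mul (sq_nonneg l), Real.sqrt_sq hl.le]
    have h2 : b / (l * Real.sin ψ) = (b/l) / Real.sin ψ := by rw [div_div]
    rw [h1, h2]; ring
  have hcontG : ContinuousOn (fun ψ => (2*b) * (π/2 - Real.arcsin ((b/l) / Real.sin ψ)))
      (Set.Icc pb (π/2)) := by
    apply ContinuousOn.mul continuousOn_const
    apply ContinuousOn.sub continuousOn_const
    apply Real.continuous_arcsin.comp_continuousOn
    exact ContinuousOn.div continuousOn_const Real.continuous_sin.continuousOn
      (fun x hx => (lt_of_lt_of_le hb0 (hsinpos x hx)).ne')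
  have i1 : IntervalIntegrable
      (fun ψ => ∫ φ in (0:ℝ)..π, min b (l * Real.sin ψ * Real.sin φ)) volume 0 pb :=
    eqOn_intervalIntegrable e1 (by apply Continuous.intervalIntegrable; fun_prop)
  have hcont2 : ContinuousOn (fun ψ => (2*l) * Real.sin ψ
        - (2*l) * Real.sqrt (Real.sin ψ ^ 2 - (b/l)^2)
        + (2*b) * (π/2 - Real.arcsin ((b/l) / Real.sin ψ))) (Set.uIcc pb (π/2)) := by
    rw [Set.uIcc_of_le hpb2]
    exact ContinuousOn.add (by fun_prop) hcontG
  have i2 : IntervalIntegrable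
      (fun ψ => ∫ φ in (0:ℝ)..π, min b (l * Real.sin ψ * Real.sin φ)) volume pb (π/2) :=
    eqOn_intervalIntegrable e2 hcont2.intervalIntegrable
  rw [show B3 l b
    = ∫ ψ in (0:ℝ)..(π/2), ∫ φ in (0:ℝ)..π, min b (l * Real.sin ψ * Real.sin φ) from rfl]
  rw [← intervalIntegral.integral_add_adjacent_intervals i1 i2,
    intervalIntegral.integral_congr e1, intervalIntegral.integral_congr e2]
  have hSi : IntervalIntegrable (fun ψ => (2*l) * Real.sin ψ) volume pb (π/2) := by
    apply Continuous.intervalIntegrable; fun_prop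
  have hFi : IntervalIntegrable (fun ψ => (2*l) * Real.sqrt (Real.sin ψ ^ 2 - (b/l)^2))
      volume pb (π/2) := by
    apply Continuous.intervalIntegrable; fun_prop
  have hGi : IntervalIntegrable (fun ψ => (2*b) * (π/2 - Real.arcsin ((b/l) / Real.sin ψ)))
      volume pb (π/2) := by
    apply ContinuousOn.intervalIntegrable
    rw [Set.uIcc_of_le hpb2]; exact hcontG
  rw [intervalIntegral.integral_add (hSi.sub hFi) hGi, intervalIntegral.integral_sub hSi hFi,
    intervalIntegral.integral_const_mul, intervalIntegral.integral_const_mul,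
    intervalIntegral.integral_const_mul, intervalIntegral.integral_const_mul,
    integral_sin, integral_sin]
  rw [show (∫ ψ in pb..(π/2), Real.sqrt (Real.sin ψ ^ 2 - (b/l)^2)) = Faux pb (π/2) (b/l) from rfl,
    show (∫ ψ in pb..(π/2), (π/2 - Real.arcsin ((b/l) / Real.sin ψ))) = Gaux pb (π/2) (b/l) from rfl,
    Real.cos_zero, Real.cos_pi_div_two]
  ring

set_option maxHeartbeats 3000000 in
lemma AB3_eq (l a b : ℝ) (hb : 0 < b) (hba : b ≤ a)
    (hLl : Real.sqrt (a ^ 2 + b ^ 2) < l) :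
    AB3 l a b
      = l^2/2*(Real.arcsin (a/l) + Real.arcsin (b/l) - Real.arcsin (Real.sqrt (a^2+b^2)/l))
        + a^2*Real.arcsin (a/l) + b^2*Real.arcsin (b/l)
        - (a^2+b^2)*Real.arcsin (Real.sqrt (a^2+b^2)/l)
        + 3/2*(l*a)*Real.sqrt (1-(a/l)^2) + 3/2*(l*b)*Real.sqrt (1-(b/l)^2)
        + l*Real.sqrt (a^2+b^2)/2*Real.sqrt (1-(Real.sqrt (a^2+b^2)/l)^2)
        - 2*l*a*Faux (Real.arcsin (Real.sqrt (a^2+b^2)/l)) (π/2) (b/l)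
        - 2*l*b*Faux (Real.arcsin (Real.sqrt (a^2+b^2)/l)) (π/2) (a/l)
        + 2*a*b*(Gaux (Real.arcsin (Real.sqrt (a^2+b^2)/l)) (π/2) (a/l)
            + Gaux (Real.arcsin (Real.sqrt (a^2+b^2)/l)) (π/2) (b/l))
        - a*b*π*(π/2 - Real.arcsin (Real.sqrt (a^2+b^2)/l)) := by
  have ha : 0 < a := hb.trans_le hba
  set L := Real.sqrt (a^2+b^2) with hLdef
  have hL0 : 0 < L := Real.sqrt_pos.2 (by positivity)
  have hLsq : L^2 = a^2+b^2 := Real.sq_sqrt (by positivity)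
  have hl : 0 < l := hL0.trans hLl
  have haL : a ≤ L := by nlinarith [hLsq, hL0, hb]
  have hal : a < l := lt_of_le_of_lt haL hLl
  have hbl : b < l := lt_of_le_of_lt hba hal
  have hl0 : l ≠ 0 := hl.ne'
  set pa := Real.arcsin (a/l) with hpa
  set pb := Real.arcsin (b/l) with hpb
  set pL := Real.arcsin (L/l) with hpL
  have ha1 : a/l ≤ 1 := by rw [div_le_one hl]; exact hal.le
  have hb1 : b/l ≤ 1 := by rw [div_le_one hl]; exact hbl.le
  have hL1 : L/l ≤ 1 := by rw [div_le_one hl]; exact hLl.le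
  have ha0 : 0 < a/l := div_pos ha hl
  have hb0 : 0 < b/l := div_pos hb hl
  have hL0' : 0 < L/l := div_pos hL0 hl
  have hpb0 : 0 < pb := Real.arcsin_pos.2 hb0
  have hpa2 : pa ≤ π/2 := Real.arcsin_le_pi_div_two _
  have hpb2 : pb ≤ π/2 := Real.arcsin_le_pi_div_two _
  have hpL2 : pL ≤ π/2 := Real.arcsin_le_pi_div_two _
  have hpba : pb ≤ pa := Real.monotone_arcsin (by gcongr)
  have hpaL : pa ≤ pL := Real.monotone_arcsin (by gcongr)
  have hsinpa : Real.sin pa = a/l := Real.sin_arcsin (by linarith) ha1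
  have hsinpb : Real.sin pb = b/l := Real.sin_arcsin (by linarith) hb1
  have hsinpL : Real.sin pL = L/l := Real.sin_arcsin (by linarith) hL1
  have hcospa : Real.cos pa = Real.sqrt (1-(a/l)^2) := by rw [hpa, Real.cos_arcsin]
  have hcospb : Real.cos pb = Real.sqrt (1-(b/l)^2) := by rw [hpb, Real.cos_arcsin]
  have hcospL : Real.cos pL = Real.sqrt (1-(L/l)^2) := by rw [hpL, Real.cos_arcsin]
  have hsin_nonneg : ∀ x ∈ Set.Icc (0:ℝ) (π/2), 0 ≤ Real.sin x := fun x hx =>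
    Real.sin_nonneg_of_nonneg_of_le_pi hx.1 (by linarith [pi_pos, hx.2])
  have hsinmono : ∀ x y : ℝ, -(π/2) ≤ x → x ≤ y → y ≤ π/2 → Real.sin x ≤ Real.sin y :=
    fun x y h1 h2 h3 => Real.sin_le_sin_of_le_of_le_pi_div_two h1 h3 h2
  -- the inner integrand as a function of ψ
  set f : ℝ → ℝ := fun ψ => ∫ φ in (0:ℝ)..π,
    min a (l * Real.sin ψ * |Real.cos φ|) * min b (l * Real.sin ψ * Real.sin φ) with hf
  have e1 : Set.EqOn f (fun ψ => l^2 * Real.sin ψ^2) (Set.uIcc 0 pb) := by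
    intro ψ hψ
    rw [Set.uIcc_of_le hpb0.le] at hψ
    have hs0 : 0 ≤ Real.sin ψ := hsin_nonneg ψ ⟨hψ.1, hψ.2.trans hpb2⟩
    have hsle : Real.sin ψ ≤ b/l := by
      rw [← hsinpb]; exact hsinmono _ _ (by linarith [pi_pos, hψ.1]) hψ.2 hpb2
    have key := innerAB_1 a b (l * Real.sin ψ) (by positivity)
      (by calc l * Real.sin ψ ≤ l * (b/l) := by nlinarith
          _ = b := by field_simp) hba
    rw [hf]; dsimp only; rw [key]; ring
  have e2 : Set.EqOn f (fun ψ => (2*b*l) * Real.sin ψ - b^2) (Set.uIcc pb pa) := by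
    intro ψ hψ
    rw [Set.uIcc_of_le hpba] at hψ
    have hmem : ψ ∈ Set.Icc (0:ℝ) (π/2) := ⟨hpb0.le.trans hψ.1, hψ.2.trans hpa2⟩
    have hs0 : 0 ≤ Real.sin ψ := hsin_nonneg ψ hmem
    have hsge : b/l ≤ Real.sin ψ := by
      rw [← hsinpb]; exact hsinmono _ _ (by linarith [pi_pos, hpb0]) hψ.1 hmem.2
    have hsle : Real.sin ψ ≤ a/l := by
      rw [← hsinpa]; exact hsinmono _ _ (by linarith [pi_pos, hmem.1]) hψ.2 hpa2
    have key := innerAB_2 a b (l * Real.sin ψ) hb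
      (by calc b = l * (b/l) := by field_simp
          _ ≤ l * Real.sin ψ := by nlinarith)
      (by calc l * Real.sin ψ ≤ l * (a/l) := by nlinarith
          _ = a := by field_simp)
    rw [hf]; dsimp only; rw [key]; ring
  have e3 : Set.EqOn f (fun ψ => (2*(a+b)*l) * Real.sin ψ - (a^2+b^2) - l^2 * Real.sin ψ^2)
      (Set.uIcc pa pL) := by
    intro ψ hψ
    rw [Set.uIcc_of_le hpaL] at hψ
    have hmem : ψ ∈ Set.Icc (0:ℝ) (π/2) := ⟨(hpb0.trans_le hpba).le.trans hψ.1, hψ.2.trans hpL2⟩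
    have hs0 : 0 ≤ Real.sin ψ := hsin_nonneg ψ hmem
    have hsge : a/l ≤ Real.sin ψ := by
      rw [← hsinpa]; exact hsinmono _ _ (by linarith [pi_pos, ha0, Real.arcsin_pos.2 ha0]) hψ.1 hmem.2
    have hsle : Real.sin ψ ≤ L/l := by
      rw [← hsinpL]; exact hsinmono _ _ (by linarith [pi_pos, hmem.1]) hψ.2 hpL2
    have key := innerAB_3 a b (l * Real.sin ψ) hb hba
      (by calc a = l * (a/l) := by field_simp
          _ ≤ l * Real.sin ψ := by nlinarith)
      (by
        have h1 : l * Real.sin ψ ≤ L := by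
          calc l * Real.sin ψ ≤ l * (L/l) := by nlinarith
          _ = L := by field_simp
        calc (l * Real.sin ψ)^2 ≤ L^2 := by nlinarith [mul_nonneg hl.le hs0]
        _ = a^2+b^2 := hLsq)
    rw [hf]; dsimp only; rw [key]; ring
  have hsinposL : ∀ x ∈ Set.Icc pL (π/2), L/l ≤ Real.sin x := by
    intro x hx
    rw [← hsinpL]
    exact hsinmono _ _ (by linarith [pi_pos, Real.arcsin_pos.2 hL0']) hx.1 hx.2
  have e4 : Set.EqOn f (fun ψ => (2*(a+b)*l) * Real.sin ψ
      - (2*a*l) * Real.sqrt (Real.sin ψ^2 - (b/l)^2)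
      - (2*b*l) * Real.sqrt (Real.sin ψ^2 - (a/l)^2)
      + (2*a*b) * (π/2 - Real.arcsin ((a/l) / Real.sin ψ))
      + (2*a*b) * (π/2 - Real.arcsin ((b/l) / Real.sin ψ))
      - a*b*π) (Set.uIcc pL (π/2)) := by
    intro ψ hψ
    rw [Set.uIcc_of_le hpL2] at hψ
    have hsge : L/l ≤ Real.sin ψ := hsinposL ψ hψ
    have hsp : 0 < Real.sin ψ := lt_of_lt_of_le hL0' hsge
    have key := innerAB_4 a b (l * Real.sin ψ) hb hba (by positivity)
      (by
        have h1 : L ≤ l * Real.sin ψ := by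
          calc L = l * (L/l) := by field_simp
          _ ≤ l * Real.sin ψ := by nlinarith
        calc a^2+b^2 = L^2 := hLsq.symm
        _ ≤ (l * Real.sin ψ)^2 := by nlinarith [hL0.le])
    rw [hf]; dsimp only; rw [key]
    have h1a : Real.sqrt ((l*Real.sin ψ)^2 - b^2) = l * Real.sqrt (Real.sin ψ^2 - (b/l)^2) := by
      rw [show (l*Real.sin ψ)^2 - b^2 = l^2 * (Real.sin ψ^2 - (b/l)^2) by field_simp,
        Real.sqrt_mul (sq_nonneg l), Real.sqrt_sq hl.le]
    have h1b : Real.sqrt ((l*Real.sin ψ)^2 - a^2) = l * Real.sqrt (Real.sin ψ^2 - (a/l)^2) := by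
      rw [show (l*Real.sin ψ)^2 - a^2 = l^2 * (Real.sin ψ^2 - (a/l)^2) by field_simp,
        Real.sqrt_mul (sq_nonneg l), Real.sqrt_sq hl.le]
    have h2a : a / (l * Real.sin ψ) = (a/l) / Real.sin ψ := by rw [div_div]
    have h2b : b / (l * Real.sin ψ) = (b/l) / Real.sin ψ := by rw [div_div]
    rw [h1a, h1b, h2a, h2b]; ring
  have hcontG4 : ContinuousOn (fun ψ => (2*(a+b)*l) * Real.sin ψ
      - (2*a*l) * Real.sqrt (Real.sin ψ^2 - (b/l)^2)
      - (2*b*l) * Real.sqrt (Real.sin ψ^2 - (a/l)^2)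
      + (2*a*b) * (π/2 - Real.arcsin ((a/l) / Real.sin ψ))
      + (2*a*b) * (π/2 - Real.arcsin ((b/l) / Real.sin ψ))
      - a*b*π) (Set.Icc pL (π/2)) := by
    have hne : ∀ x ∈ Set.Icc pL (π/2), Real.sin x ≠ 0 :=
      fun x hx => (lt_of_lt_of_le hL0' (hsinposL x hx)).ne'
    apply ContinuousOn.sub
    apply ContinuousOn.add
    apply ContinuousOn.add
    · fun_prop
    · exact ContinuousOn.mul continuousOn_const (ContinuousOn.sub continuousOn_const
        (Real.continuous_arcsin.comp_continuousOn (ContinuousOn.div continuousOn_const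
          Real.continuous_sin.continuousOn hne)))
    · exact ContinuousOn.mul continuousOn_const (ContinuousOn.sub continuousOn_const
        (Real.continuous_arcsin.comp_continuousOn (ContinuousOn.div continuousOn_const
          Real.continuous_sin.continuousOn hne)))
    · exact continuousOn_const
  have i1 : IntervalIntegrable f volume 0 pb :=
    eqOn_intervalIntegrable e1 (by apply Continuous.intervalIntegrable; fun_prop)
  have i2 : IntervalIntegrable f volume pb pa :=
    eqOn_intervalIntegrable e2 (by apply Continuous.intervalIntegrable; fun_prop)
  have i3 : IntervalIntegrable f volume pa pL :=
    eqOn_intervalIntegrable e3 (by apply Continuous.intervalIntegrable; fun_prop)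
  have i4 : IntervalIntegrable f volume pL (π/2) :=
    eqOn_intervalIntegrable e4 (by
      apply ContinuousOn.intervalIntegrable
      rw [Set.uIcc_of_le hpL2]; exact hcontG4)
  have hAB3 : AB3 l a b = ∫ ψ in (0:ℝ)..(π/2), f ψ := rfl
  rw [hAB3, ← intervalIntegral.integral_add_adjacent_intervals i1 ((i2.trans i3).trans i4),
    ← intervalIntegral.integral_add_adjacent_intervals i2 (i3.trans i4),
    ← intervalIntegral.integral_add_adjacent_intervals i3 i4,
    intervalIntegral.integral_congr e1, intervalIntegral.integral_congr e2,
    intervalIntegral.integral_congr e3, intervalIntegral.integral_congr e4]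
  -- evaluate piece 1
  have v1 : ∫ ψ in (0:ℝ)..pb, l^2 * Real.sin ψ^2
      = l^2 * ((Real.sin 0 * Real.cos 0 - Real.sin pb * Real.cos pb + pb - 0)/2) := by
    rw [intervalIntegral.integral_const_mul, integral_sin_sq]
  have v2 : ∫ ψ in pb..pa, ((2*b*l) * Real.sin ψ - b^2)
      = (2*b*l) * (Real.cos pb - Real.cos pa) - (pa - pb) * b^2 := by
    rw [intervalIntegral.integral_sub (by apply Continuous.intervalIntegrable; fun_prop)
      (by apply Continuous.intervalIntegrable; fun_prop),
      intervalIntegral.integral_const_mul, integral_sin, intervalIntegral.integral_const,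
      smul_eq_mul]
  have v3 : ∫ ψ in pa..pL, ((2*(a+b)*l) * Real.sin ψ - (a^2+b^2) - l^2 * Real.sin ψ^2)
      = (2*(a+b)*l) * (Real.cos pa - Real.cos pL) - (pL - pa) * (a^2+b^2)
        - l^2 * ((Real.sin pa * Real.cos pa - Real.sin pL * Real.cos pL + pL - pa)/2) := by
    rw [intervalIntegral.integral_sub ((Continuous.intervalIntegrable (by fun_prop) _ _).sub
        (Continuous.intervalIntegrable (by fun_prop) _ _))
      (by apply Continuous.intervalIntegrable; fun_prop),
      intervalIntegral.integral_sub (by apply Continuous.intervalIntegrable; fun_prop)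
        (by apply Continuous.intervalIntegrable; fun_prop),
      intervalIntegral.integral_const_mul, integral_sin, intervalIntegral.integral_const,
      smul_eq_mul, intervalIntegral.integral_const_mul, integral_sin_sq]
  have iS : IntervalIntegrable (fun ψ => (2*(a+b)*l) * Real.sin ψ) volume pL (π/2) := by
    apply Continuous.intervalIntegrable; fun_prop
  have iF1 : IntervalIntegrable (fun ψ => (2*a*l) * Real.sqrt (Real.sin ψ^2 - (b/l)^2))
      volume pL (π/2) := by apply Continuous.intervalIntegrable; fun_prop
  have iF2 : IntervalIntegrable (fun ψ => (2*b*l) * Real.sqrt (Real.sin ψ^2 - (a/l)^2))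
      volume pL (π/2) := by apply Continuous.intervalIntegrable; fun_prop
  have hne : ∀ x ∈ Set.Icc pL (π/2), Real.sin x ≠ 0 :=
    fun x hx => (lt_of_lt_of_le hL0' (hsinposL x hx)).ne'
  have iG1 : IntervalIntegrable (fun ψ => (2*a*b) * (π/2 - Real.arcsin ((a/l) / Real.sin ψ)))
      volume pL (π/2) := by
    apply ContinuousOn.intervalIntegrable
    rw [Set.uIcc_of_le hpL2]
    exact ContinuousOn.mul continuousOn_const (ContinuousOn.sub continuousOn_const
      (Real.continuous_arcsin.comp_continuousOn (ContinuousOn.div continuousOn_const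
        Real.continuous_sin.continuousOn hne)))
  have iG2 : IntervalIntegrable (fun ψ => (2*a*b) * (π/2 - Real.arcsin ((b/l) / Real.sin ψ)))
      volume pL (π/2) := by
    apply ContinuousOn.intervalIntegrable
    rw [Set.uIcc_of_le hpL2]
    exact ContinuousOn.mul continuousOn_const (ContinuousOn.sub continuousOn_const
      (Real.continuous_arcsin.comp_continuousOn (ContinuousOn.div continuousOn_const
        Real.continuous_sin.continuousOn hne)))
  have iC : IntervalIntegrable (fun _ : ℝ => a*b*π) volume pL (π/2) :=
    intervalIntegrable_const
  have v4 : ∫ ψ in pL..(π/2), ((2*(a+b)*l) * Real.sin ψ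
      - (2*a*l) * Real.sqrt (Real.sin ψ^2 - (b/l)^2)
      - (2*b*l) * Real.sqrt (Real.sin ψ^2 - (a/l)^2)
      + (2*a*b) * (π/2 - Real.arcsin ((a/l) / Real.sin ψ))
      + (2*a*b) * (π/2 - Real.arcsin ((b/l) / Real.sin ψ))
      - a*b*π)
      = (2*(a+b)*l) * (Real.cos pL - Real.cos (π/2))
        - (2*a*l) * Faux pL (π/2) (b/l) - (2*b*l) * Faux pL (π/2) (a/l)
        + (2*a*b) * Gaux pL (π/2) (a/l) + (2*a*b) * Gaux pL (π/2) (b/l)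
        - (π/2 - pL) * (a*b*π) := by
    rw [intervalIntegral.integral_sub ((((iS.sub iF1).sub iF2).add iG1).add iG2) iC,
      intervalIntegral.integral_add (((iS.sub iF1).sub iF2).add iG1) iG2,
      intervalIntegral.integral_add ((iS.sub iF1).sub iF2) iG1,
      intervalIntegral.integral_sub (iS.sub iF1) iF2,
      intervalIntegral.integral_sub iS iF1,
      intervalIntegral.integral_const_mul, intervalIntegral.integral_const_mul,
      intervalIntegral.integral_const_mul, intervalIntegral.integral_const_mul,
      intervalIntegral.integral_const_mul, integral_sin, intervalIntegral.integral_const,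
      smul_eq_mul]
    rfl
  rw [v1, v2, v3, v4, hsinpa, hsinpb, hsinpL, hcospa, hcospb, hcospL,
    Real.cos_pi_div_two, Real.sin_zero, Real.cos_zero]
  field_simp
  ring

lemma Faux_add (α β γ t : ℝ) : Faux α γ t = Faux α β t + Faux β γ t := by
  have h : Continuous fun ψ : ℝ => Real.sqrt (Real.sin ψ ^ 2 - t ^ 2) := by fun_prop
  exact (intervalIntegral.integral_add_adjacent_intervals
    (h.intervalIntegrable _ _) (h.intervalIntegrable _ _)).symm

lemma Gaux_add (α β γ t : ℝ) (hαβ : α ≤ β) (hβγ : β ≤ γ)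
    (hpos : ∀ x ∈ Set.Icc α γ, Real.sin x ≠ 0) :
    Gaux α γ t = Gaux α β t + Gaux β γ t := by
  have hc : ContinuousOn (fun ψ => π/2 - Real.arcsin (t / Real.sin ψ)) (Set.Icc α γ) :=
    ContinuousOn.sub continuousOn_const
      (Real.continuous_arcsin.comp_continuousOn (ContinuousOn.div continuousOn_const
        Real.continuous_sin.continuousOn hpos))
  have h1 : IntervalIntegrable (fun ψ => π/2 - Real.arcsin (t / Real.sin ψ)) volume α β := by
    apply ContinuousOn.intervalIntegrable
    rw [Set.uIcc_of_le hαβ]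
    exact hc.mono (Set.Icc_subset_Icc le_rfl hβγ)
  have h2 : IntervalIntegrable (fun ψ => π/2 - Real.arcsin (t / Real.sin ψ)) volume β γ := by
    apply ContinuousOn.intervalIntegrable
    rw [Set.uIcc_of_le hβγ]
    exact hc.mono (Set.Icc_subset_Icc hαβ le_rfl)
  exact (intervalIntegral.integral_add_adjacent_intervals h1 h2).symm

set_option maxHeartbeats 1600000 in
theorem stmt18 (l a b : ℝ) (hb : 0 < b) (hba : b ≤ a)
    (hLl : Real.sqrt (a ^ 2 + b ^ 2) < l) :
    S3 l a b
      = (2 * l * b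
        - 2 * l * b * Faux (Real.arcsin (a / l))
            (Real.arcsin (Real.sqrt (a ^ 2 + b ^ 2) / l)) (a / l)
        + 2 * a * b * Gaux (Real.arcsin (a / l))
            (Real.arcsin (Real.sqrt (a ^ 2 + b ^ 2) / l)) (a / l))
      + (2 * l * a
        - 2 * l * a * Faux (Real.arcsin (b / l))
            (Real.arcsin (Real.sqrt (a ^ 2 + b ^ 2) / l)) (b / l)
        + 2 * a * b * Gaux (Real.arcsin (b / l))
            (Real.arcsin (Real.sqrt (a ^ 2 + b ^ 2) / l)) (b / l))
      - (l ^ 2 / 2 * Real.arcsin (a / l)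
        + 3 / 2 * (l * a) * Real.sqrt (1 - a ^ 2 / l ^ 2)
        - a ^ 2 * (π / 2 - Real.arcsin (a / l)))
      - (l ^ 2 / 2 * Real.arcsin (b / l)
        + 3 / 2 * (l * b) * Real.sqrt (1 - b ^ 2 / l ^ 2)
        - b ^ 2 * (π / 2 - Real.arcsin (b / l)))
      + (l ^ 2 / 2 * Real.arcsin (Real.sqrt (a ^ 2 + b ^ 2) / l)
        - l * Real.sqrt (a ^ 2 + b ^ 2) / 2
            * Real.sqrt (1 - Real.sqrt (a ^ 2 + b ^ 2) ^ 2 / l ^ 2)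
        - Real.sqrt (a ^ 2 + b ^ 2) ^ 2
            * (π / 2 - Real.arcsin (Real.sqrt (a ^ 2 + b ^ 2) / l)))
      + a * b * π * (π / 2 - Real.arcsin (Real.sqrt (a ^ 2 + b ^ 2) / l)) := by
  have ha : 0 < a := hb.trans_le hba
  have hL0 : 0 < Real.sqrt (a^2+b^2) := Real.sqrt_pos.2 (by positivity)
  have hLsq : Real.sqrt (a^2+b^2)^2 = a^2+b^2 := Real.sq_sqrt (by positivity)
  have hl : 0 < l := hL0.trans hLl
  have haL : a ≤ Real.sqrt (a^2+b^2) := by nlinarith [hLsq, hL0, hb]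
  have hal : a < l := lt_of_le_of_lt haL hLl
  have hbl : b < l := lt_of_le_of_lt hba hal
  have ha0 : 0 < a/l := div_pos ha hl
  have hb0 : 0 < b/l := div_pos hb hl
  have hL0' : 0 < Real.sqrt (a^2+b^2)/l := div_pos hL0 hl
  have hpb0 : 0 < Real.arcsin (b/l) := Real.arcsin_pos.2 hb0
  have hpa0 : 0 < Real.arcsin (a/l) := Real.arcsin_pos.2 ha0
  have hpa2 : Real.arcsin (a/l) ≤ π/2 := Real.arcsin_le_pi_div_two _
  have hpb2 : Real.arcsin (b/l) ≤ π/2 := Real.arcsin_le_pi_div_two _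
  have hpL2 : Real.arcsin (Real.sqrt (a^2+b^2)/l) ≤ π/2 := Real.arcsin_le_pi_div_two _
  have hpaL : Real.arcsin (a/l) ≤ Real.arcsin (Real.sqrt (a^2+b^2)/l) :=
    Real.monotone_arcsin (by gcongr)
  have hpbL : Real.arcsin (b/l) ≤ Real.arcsin (Real.sqrt (a^2+b^2)/l) :=
    Real.monotone_arcsin (by gcongr; exact hba.trans haL)
  have hsinne : ∀ (c : ℝ), 0 < c → ∀ x ∈ Set.Icc (Real.arcsin c) (π/2), Real.sin x ≠ 0 := by
    intro c hc x hx
    have : 0 < Real.arcsin c := Real.arcsin_pos.2 hc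
    exact (Real.sin_pos_of_pos_of_lt_pi (lt_of_lt_of_le this hx.1)
      (by linarith [pi_pos, hx.2])).ne'
  rw [show S3 l a b = b * A3 l a + a * B3 l b - AB3 l a b from rfl,
    A3_eq l a ha hal, B3_eq l b hb hbl, AB3_eq l a b hb hba hLl,
    Faux_add (Real.arcsin (a/l)) (Real.arcsin (Real.sqrt (a^2+b^2)/l)) (π/2) (a/l),
    Faux_add (Real.arcsin (b/l)) (Real.arcsin (Real.sqrt (a^2+b^2)/l)) (π/2) (b/l),
    Gaux_add (Real.arcsin (a/l)) (Real.arcsin (Real.sqrt (a^2+b^2)/l)) (π/2) (a/l)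
      hpaL hpL2 (hsinne _ ha0),
    Gaux_add (Real.arcsin (b/l)) (Real.arcsin (Real.sqrt (a^2+b^2)/l)) (π/2) (b/l)
      hpbL hpL2 (hsinne _ hb0)]
  rw [div_pow a l 2, div_pow b l 2, div_pow (Real.sqrt (a^2+b^2)) l 2, hLsq]
  ring
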